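/- Let K_{s,t} be the complete bipartite graph with classes of sizes s and t, and p ≥ 2. Then μ^{(p)}(K_{s,t}) = s·t·(a + b)², where a = (s + t·(s/t)^{p/(p−1)})^{−1/p} and b = (s/t)^{1/(p−1)} · a. -/

import Mathlib

open scoped Classical
open Finset

/-- The `p`-norm of a vector. -/
noncomputable def pNorm {V : Type*} [Fintype V] (p : ℝ) (x : V → ℝ) : ℝ :=
  (∑ i, |x i| ^ p) ^ (1 / p)

/-- The sup-norm of a vector. -/
noncomputable def supNorm {V : Type*} [Fintype V] (x : V → ℝ) : ℝ :=
  ⨆ i, |x i|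

/-- The Laplacian quadratic form `∑_{ij ∈ E} (x_i - x_j)^2` of a graph. -/
noncomputable def quadForm {V : Type*} [Fintype V] (G : SimpleGraph V) (x : V → ℝ) : ℝ :=
  (∑ i, ∑ j, if G.Adj i j then (x i - x j) ^ 2 else 0) / 2

/-- The `p`-spectral radius of the Laplacian: `μ⁽ᵖ⁾(G) = max_{‖x‖ₚ = 1} xᵀLx`. -/
noncomputable def mu {V : Type*} [Fintype V] (G : SimpleGraph V) (p : ℝ) : ℝ :=
  sSup {y | ∃ x : V → ℝ, pNorm p x = 1 ∧ quadForm G x = y}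

/-- `μ⁽^∞⁾(G) = max_{‖x‖_∞ = 1} xᵀLx`. -/
noncomputable def muInf {V : Type*} [Fintype V] (G : SimpleGraph V) : ℝ :=
  sSup {y | ∃ x : V → ℝ, supNorm x = 1 ∧ quadForm G x = y}

lemma quadForm_bip (s t : ℕ) (x : Fin s ⊕ Fin t → ℝ) :
    quadForm (completeBipartiteGraph (Fin s) (Fin t)) x
      = ∑ i : Fin s, ∑ j : Fin t, (x (.inl i) - x (.inr j))^2 := by
  unfold quadForm
  simp only [Fintype.sum_sum_type, completeBipartiteGraph_adj, Sum.isLeft_inl, Sum.isRight_inr,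
    Sum.isLeft_inr, Sum.isRight_inl]
  norm_num
  rw [Finset.sum_comm (f := fun j i => (x (Sum.inr j) - x (Sum.inl i))^2)]
  have h : ∀ (i : Fin s) (j : Fin t), (x (.inr j) - x (.inl i))^2 = (x (.inl i) - x (.inr j))^2 := by
    intro i j; ring
  simp only [h]
  ring

lemma holderAux {n : ℕ} (f : Fin n → ℝ) (hf : ∀ i, 0 ≤ f i) {r : ℝ} (hr : 1 ≤ r) :
    ∑ i, f i ≤ (n : ℝ) ^ ((1:ℝ) - 1/r) * (∑ i, f i ^ r) ^ (1/r) := by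
  have := Real.inner_le_weight_mul_Lp_of_nonneg Finset.univ hr (fun _ => (1:ℝ)) f
    (fun _ => zero_le_one) hf
  simpa [one_div] using this

lemma holderSqAux {n : ℕ} (f : Fin n → ℝ) (hf : ∀ i, 0 ≤ f i) {p : ℝ} (hp : 2 ≤ p) :
    ∑ i, f i ^ 2 ≤ (n : ℝ) ^ ((1:ℝ) - 2/p) * (∑ i, f i ^ p) ^ (2/p) := by
  have hp0 : (0:ℝ) < p := by linarith
  have hr : (1:ℝ) ≤ p/2 := by linarith
  have h := holderAux (fun i => f i ^ 2) (fun i => sq_nonneg _) hr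
  have key : ∀ i : Fin n, ((f i ^ 2) ^ (p/2) : ℝ) = f i ^ p := by
    intro i
    rw [← Real.rpow_natCast (f i) 2, ← Real.rpow_mul (hf i)]
    congr 1
    push_cast; ring
  simp only [key] at h
  rw [show (1:ℝ) - 1/(p/2) = 1 - 2/p by rw [one_div_div], one_div_div] at h
  exact h


theorem mu_complete_bipartite (s t : ℕ) (hs : 0 < s) (ht : 0 < t) (p : ℝ) (hp : 2 ≤ p) :
    mu (completeBipartiteGraph (Fin s) (Fin t)) p =
      (s : ℝ) * t *
        ((((s : ℝ) + t * ((s : ℝ) / t) ^ (p / (p - 1))) ^ (-(1 / p))) +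
          ((s : ℝ) / t) ^ (1 / (p - 1)) *
            (((s : ℝ) + t * ((s : ℝ) / t) ^ (p / (p - 1))) ^ (-(1 / p)))) ^ 2 := by
  have hp1 : (1:ℝ) < p := by linarith
  have hp0 : (0:ℝ) < p := by linarith
  have hpm1 : (0:ℝ) < p - 1 := by linarith
  have hS : (0:ℝ) < (s:ℝ) := by exact_mod_cast hs
  have hT : (0:ℝ) < (t:ℝ) := by exact_mod_cast ht
  set S : ℝ := (s:ℝ) with hSdef
  set T : ℝ := (t:ℝ) with hTdef
  set q : ℝ := p / (p - 1) with hqdef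
  have hpq : p.HolderConjugate q := Real.HolderConjugate.conjExponent hp1
  have hq1 : 1 < q := hpq.symm.lt
  have hq0 : 0 < q := hpq.symm.pos
  have hST : (0:ℝ) < S / T := div_pos hS hT
  set D : ℝ := S + T * (S / T) ^ q with hDdef
  have hD : 0 < D := by positivity
  set a : ℝ := D ^ (-(1/p)) with hadef
  set b : ℝ := (S / T) ^ (1/(p-1)) * a with hbdef
  have ha : 0 < a := Real.rpow_pos_of_pos hD _
  have hb : 0 < b := mul_pos (Real.rpow_pos_of_pos hST _) ha
  set M : ℝ := S * T * (a + b) ^ 2 with hMdef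
  -- exponent arithmetic
  have hqp : q / p = 1 / (p - 1) := by
    rw [hqdef]; field_simp
  have hapow : a ^ p = D⁻¹ := by
    rw [hadef, ← Real.rpow_mul hD.le, show (-(1/p))*p = -1 by field_simp, Real.rpow_neg_one]
  have hbpow : b ^ p = (S/T) ^ q * a ^ p := by
    rw [hbdef, Real.mul_rpow (Real.rpow_nonneg hST.le _) ha.le, ← Real.rpow_mul hST.le,
      show (1/(p-1))*p = q by rw [hqdef, one_div_mul_eq_div]]
  set α : ℝ := S ^ (-(1/p)) with hαdef
  set β : ℝ := T ^ (-(1/p)) with hβdef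
  have hα : 0 < α := Real.rpow_pos_of_pos hS _
  have hβ : 0 < β := Real.rpow_pos_of_pos hT _
  set E : ℝ := (S/T) ^ (q/p) with hEdef
  have hE : (0:ℝ) < E := Real.rpow_pos_of_pos hST _
  have hq_split : q = q/p + 1 := by
    rw [hqdef]; field_simp; ring
  have hDfac : D = S * (1 + E) := by
    have h1 : (S/T)^q = E * (S/T) := by
      conv_lhs => rw [hq_split]
      rw [Real.rpow_add hST, Real.rpow_one, hEdef]
    rw [hDdef, h1]
    field_simp
  have h1q : 1 - 1/p = 1/q := by
    have := hpq.inv_add_inv_eq_one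
    rw [← one_div, ← one_div] at this
    linarith
  have hcross : S ^ (-(q/p)) * E = T ^ (-(q/p)) := by
    rw [hEdef, Real.div_rpow hS.le hT.le, ← mul_div_assoc, ← Real.rpow_add hS, neg_add_cancel,
      Real.rpow_zero, one_div, ← Real.rpow_neg hT.le]
  have hprod : S ^ (-(q/p)) * (1 + E) = S ^ (-(q/p)) + T ^ (-(q/p)) := by
    rw [mul_add, mul_one, hcross]
  have hab : a + b = (S ^ (-(q/p)) + T ^ (-(q/p))) ^ (1/q) := by
    have hb' : b = E * a := by
      rw [hbdef, hEdef, hqp]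
    have ha' : a = α * (1+E) ^ (-(1/p)) := by
      rw [hadef, hDfac, Real.mul_rpow hS.le (by positivity), hαdef]
    have hF : a + b = α * (1+E) ^ (1/q) := by
      rw [hb', ha']
      have h2 : (1+E) * (1+E) ^ (-(1/p)) = (1+E) ^ (1/q) := by
        nth_rewrite 1 [← Real.rpow_one (1+E)]
        rw [← Real.rpow_add (by positivity : (0:ℝ) < 1 + E),
          show (1:ℝ) + -(1/p) = 1/q by linarith]
      rw [← h2]; ring
    have hα' : α = (S ^ (-(q/p))) ^ (1/q) := by
      rw [hαdef, ← Real.rpow_mul hS.le]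
      congr 1
      field_simp
    rw [hF, hα', ← Real.mul_rpow (Real.rpow_nonneg hS.le _) (by positivity), hprod]
  -- upper bound
  have key : ∀ x : Fin s ⊕ Fin t → ℝ, pNorm p x = 1 →
      quadForm (completeBipartiteGraph (Fin s) (Fin t)) x ≤ M := by
    intro x hx
    set A : ℝ := ∑ i : Fin s, |x (Sum.inl i)| ^ p with hA
    set B : ℝ := ∑ j : Fin t, |x (Sum.inr j)| ^ p with hB
    have hA0 : 0 ≤ A := Finset.sum_nonneg fun i _ => Real.rpow_nonneg (abs_nonneg _) _
    have hB0 : 0 ≤ B := Finset.sum_nonneg fun j _ => Real.rpow_nonneg (abs_nonneg _) _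
    have hAB : A + B = 1 := by
      unfold pNorm at hx
      rw [Fintype.sum_sum_type] at hx
      have h0 : (0:ℝ) ≤ ∑ i : Fin s, |x (Sum.inl i)| ^ p + ∑ j : Fin t, |x (Sum.inr j)| ^ p := by
        positivity
      have h1 := congrArg (· ^ p) hx
      rw [← Real.rpow_mul h0, one_div_mul_cancel hp0.ne', Real.rpow_one, Real.one_rpow] at h1
      rw [hA, hB]; exact h1
    have step1 : quadForm (completeBipartiteGraph (Fin s) (Fin t)) x
        ≤ ∑ i : Fin s, ∑ j : Fin t, (|x (Sum.inl i)| + |x (Sum.inr j)|)^2 := by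
      rw [quadForm_bip]
      refine Finset.sum_le_sum fun i _ => Finset.sum_le_sum fun j _ => ?_
      have h1 : |x (Sum.inl i) - x (Sum.inr j)| ≤ |x (Sum.inl i)| + |x (Sum.inr j)| :=
        abs_sub _ _
      calc (x (Sum.inl i) - x (Sum.inr j))^2
          = |x (Sum.inl i) - x (Sum.inr j)|^2 := (sq_abs _).symm
        _ ≤ (|x (Sum.inl i)| + |x (Sum.inr j)|)^2 := by
            exact pow_le_pow_left₀ (abs_nonneg _) h1 2
    have e1 : ∀ c : ℝ, ∑ j : Fin t, (c + |x (Sum.inr j)|)^2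
        = T * c^2 + 2 * c * (∑ j : Fin t, |x (Sum.inr j)|) + ∑ j : Fin t, |x (Sum.inr j)|^2 := by
      intro c
      rw [Finset.sum_congr rfl fun j _ => add_sq c _, Finset.sum_add_distrib,
        Finset.sum_add_distrib, Finset.sum_const, Finset.card_univ, Fintype.card_fin,
        nsmul_eq_mul, ← Finset.mul_sum, ← hTdef]
    have step2 : ∑ i : Fin s, ∑ j : Fin t, (|x (Sum.inl i)| + |x (Sum.inr j)|)^2
        = T * (∑ i : Fin s, |x (Sum.inl i)|^2) + S * (∑ j : Fin t, |x (Sum.inr j)|^2)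
          + 2 * (∑ i : Fin s, |x (Sum.inl i)|) * (∑ j : Fin t, |x (Sum.inr j)|) := by
      rw [Finset.sum_congr rfl fun i _ => e1 _, Finset.sum_add_distrib, Finset.sum_add_distrib,
        Finset.sum_const, Finset.card_univ, Fintype.card_fin, nsmul_eq_mul, ← hSdef,
        ← Finset.mul_sum, ← Finset.sum_mul]
      rw [← Finset.mul_sum]
      ring
    have hu1 : ∑ i : Fin s, |x (Sum.inl i)| ≤ S^((1:ℝ)-1/p) * A^(1/p) := by
      have h := holderAux (fun i => |x (Sum.inl i)|) (fun i => abs_nonneg _) hp1.le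
      simpa [← hSdef, ← hA] using h
    have hv1 : ∑ j : Fin t, |x (Sum.inr j)| ≤ T^((1:ℝ)-1/p) * B^(1/p) := by
      have h := holderAux (fun j => |x (Sum.inr j)|) (fun j => abs_nonneg _) hp1.le
      simpa [← hTdef, ← hB] using h
    have hu2 : ∑ i : Fin s, |x (Sum.inl i)|^2 ≤ S^((1:ℝ)-2/p) * A^(2/p) := by
      have h := holderSqAux (fun i => |x (Sum.inl i)|) (fun i => abs_nonneg _) hp
      simpa [← hSdef, ← hA] using h
    have hv2 : ∑ j : Fin t, |x (Sum.inr j)|^2 ≤ T^((1:ℝ)-2/p) * B^(2/p) := by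
      have h := holderSqAux (fun j => |x (Sum.inr j)|) (fun j => abs_nonneg _) hp
      simpa [← hTdef, ← hB] using h
    have step3 : T * (∑ i : Fin s, |x (Sum.inl i)|^2) + S * (∑ j : Fin t, |x (Sum.inr j)|^2)
          + 2 * (∑ i : Fin s, |x (Sum.inl i)|) * (∑ j : Fin t, |x (Sum.inr j)|)
        ≤ T * (S^((1:ℝ)-2/p) * A^(2/p)) + S * (T^((1:ℝ)-2/p) * B^(2/p))
          + 2 * (S^((1:ℝ)-1/p) * A^(1/p)) * (T^((1:ℝ)-1/p) * B^(1/p)) := by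
      have h1 : (0:ℝ) ≤ ∑ i : Fin s, |x (Sum.inl i)| :=
        Finset.sum_nonneg fun i _ => abs_nonneg _
      have h2 : (0:ℝ) ≤ ∑ j : Fin t, |x (Sum.inr j)| :=
        Finset.sum_nonneg fun j _ => abs_nonneg _
      refine add_le_add (add_le_add (mul_le_mul_of_nonneg_left hu2 hT.le)
        (mul_le_mul_of_nonneg_left hv2 hS.le)) ?_
      rw [mul_assoc, mul_assoc]
      refine mul_le_mul_of_nonneg_left ?_ (by norm_num)
      exact mul_le_mul hu1 hv1 h2 (mul_nonneg (Real.rpow_nonneg hS.le _)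
        (Real.rpow_nonneg hA0 _))
    have hA2 : A ^ ((2:ℝ)/p) = (A^(1/p))^2 := by
      rw [← Real.rpow_natCast (A^(1/p)) 2, ← Real.rpow_mul hA0]
      congr 1
      push_cast; ring
    have hB2 : B ^ ((2:ℝ)/p) = (B^(1/p))^2 := by
      rw [← Real.rpow_natCast (B^(1/p)) 2, ← Real.rpow_mul hB0]
      congr 1
      push_cast; ring
    have hS1 : S ^ ((1:ℝ)-1/p) = S * α := by
      rw [Real.rpow_sub hS, Real.rpow_one, div_eq_mul_inv, ← Real.rpow_neg hS.le, hαdef]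
    have hT1 : T ^ ((1:ℝ)-1/p) = T * β := by
      rw [Real.rpow_sub hT, Real.rpow_one, div_eq_mul_inv, ← Real.rpow_neg hT.le, hβdef]
    have hS2 : S ^ ((1:ℝ)-2/p) = S * α^2 := by
      rw [hαdef, ← Real.rpow_natCast (S ^ (-(1/p))) 2, ← Real.rpow_mul hS.le,
        Real.rpow_sub hS, Real.rpow_one, div_eq_mul_inv, ← Real.rpow_neg hS.le]
      congr 2
      push_cast; ring
    have hT2 : T ^ ((1:ℝ)-2/p) = T * β^2 := by
      rw [hβdef, ← Real.rpow_natCast (T ^ (-(1/p))) 2, ← Real.rpow_mul hT.le,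
        Real.rpow_sub hT, Real.rpow_one, div_eq_mul_inv, ← Real.rpow_neg hT.le]
      congr 2
      push_cast; ring
    have step4 : T * (S^((1:ℝ)-2/p) * A^(2/p)) + S * (T^((1:ℝ)-2/p) * B^(2/p))
          + 2 * (S^((1:ℝ)-1/p) * A^(1/p)) * (T^((1:ℝ)-1/p) * B^(1/p))
        = S * T * (α * A^(1/p) + β * B^(1/p))^2 := by
      rw [hA2, hB2, hS1, hT1, hS2, hT2]
      ring
    have step5 : α * A^(1/p) + β * B^(1/p) ≤ a + b := by
      have hf : ∀ i ∈ Finset.univ, (0:ℝ) ≤ (![A^(1/p), B^(1/p)] : Fin 2 → ℝ) i := by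
        intro i _
        fin_cases i <;> simp [Real.rpow_nonneg hA0, Real.rpow_nonneg hB0]
      have hg : ∀ i ∈ Finset.univ, (0:ℝ) ≤ (![α, β] : Fin 2 → ℝ) i := by
        intro i _
        fin_cases i <;> simp [hα.le, hβ.le]
      have h := Real.inner_le_Lp_mul_Lq_of_nonneg Finset.univ hpq hf hg
      simp only [Fin.sum_univ_two, Matrix.cons_val_zero, Matrix.cons_val_one, Matrix.head_cons]
        at h
      have hApp : (A^(1/p))^p = A := by
        rw [← Real.rpow_mul hA0, one_div_mul_cancel hp0.ne', Real.rpow_one]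
      have hBpp : (B^(1/p))^p = B := by
        rw [← Real.rpow_mul hB0, one_div_mul_cancel hp0.ne', Real.rpow_one]
      rw [hApp, hBpp, hAB, Real.one_rpow, one_mul] at h
      have hαq : α^q = S ^ (-(q/p)) := by
        rw [hαdef, ← Real.rpow_mul hS.le]
        congr 1; ring
      have hβq : β^q = T ^ (-(q/p)) := by
        rw [hβdef, ← Real.rpow_mul hT.le]
        congr 1; ring
      rw [hαq, hβq] at h
      rw [hab]
      calc α * A^(1/p) + β * B^(1/p) = A^(1/p) * α + B^(1/p) * β := by ring
        _ ≤ _ := h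
    calc quadForm (completeBipartiteGraph (Fin s) (Fin t)) x
        ≤ ∑ i : Fin s, ∑ j : Fin t, (|x (Sum.inl i)| + |x (Sum.inr j)|)^2 := step1
      _ = _ := step2
      _ ≤ _ := step3
      _ = S * T * (α * A^(1/p) + β * B^(1/p))^2 := step4
      _ ≤ M := by
          rw [hMdef]
          have h0 : (0:ℝ) ≤ α * A^(1/p) + β * B^(1/p) :=
            add_nonneg (mul_nonneg hα.le (Real.rpow_nonneg hA0 _))
              (mul_nonneg hβ.le (Real.rpow_nonneg hB0 _))
          exact mul_le_mul_of_nonneg_left (pow_le_pow_left₀ h0 step5 2)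
            (mul_nonneg hS.le hT.le)
  -- the witness
  set x₀ : Fin s ⊕ Fin t → ℝ := Sum.elim (fun _ => a) (fun _ => -b) with hx₀
  have hnorm : pNorm p x₀ = 1 := by
    unfold pNorm
    rw [Fintype.sum_sum_type]
    simp only [hx₀, Sum.elim_inl, Sum.elim_inr, abs_of_pos ha, abs_neg, abs_of_pos hb,
      Finset.sum_const, Finset.card_univ, Fintype.card_fin, nsmul_eq_mul]
    rw [← hSdef, ← hTdef, hbpow, hapow]
    have h2 : S * D⁻¹ + T * ((S/T)^q * D⁻¹) = (S + T*(S/T)^q) * D⁻¹ := by ring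
    rw [h2, ← hDdef, mul_inv_cancel₀ hD.ne']
    exact Real.one_rpow _
  have hquad : quadForm (completeBipartiteGraph (Fin s) (Fin t)) x₀ = M := by
    rw [quadForm_bip]
    simp only [hx₀, Sum.elim_inl, Sum.elim_inr, sub_neg_eq_add, Finset.sum_const,
      Finset.card_univ, Fintype.card_fin, nsmul_eq_mul]
    rw [← hSdef, ← hTdef, hMdef]
    ring
  have hmem : M ∈ {y | ∃ x : Fin s ⊕ Fin t → ℝ,
      pNorm p x = 1 ∧ quadForm (completeBipartiteGraph (Fin s) (Fin t)) x = y} :=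
    ⟨x₀, hnorm, hquad⟩
  have hub : ∀ y ∈ {y | ∃ x : Fin s ⊕ Fin t → ℝ,
      pNorm p x = 1 ∧ quadForm (completeBipartiteGraph (Fin s) (Fin t)) x = y}, y ≤ M := by
    rintro y ⟨x, hx1, rfl⟩
    exact key x hx1
  show mu (completeBipartiteGraph (Fin s) (Fin t)) p = M
  unfold mu
  exact le_antisymm (csSup_le ⟨M, hmem⟩ hub) (le_csSup ⟨M, hub⟩ hmem)
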